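/- Every partial plane spread S in PG(6,2) of size 17 contains a 5-configuration: there exist a 5-element subset T ⊆ S and two distinct hyperplanes H₁ ≠ H₂ of V = F₂⁷ such that H₁ contains exactly 3 elements of T and H₂ contains exactly 3 elements of T. -/

import Mathlib

open Module

abbrev V2 : Type := Fin 7 → ZMod 2

/-- A partial plane spread in PG(6,2): a set of 3-dimensional subspaces of `V2 = F₂⁷`
(the blocks) any two distinct members of which intersect trivially. -/
def IsPPS (S : Set (Submodule (ZMod 2) V2)) : Prop :=
  (∀ B ∈ S, finrank (ZMod 2) ↥B = 3) ∧
    ∀ B₁ ∈ S, ∀ B₂ ∈ S, B₁ ≠ B₂ → B₁ ⊓ B₂ = ⊥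

/-- A point (1-dimensional subspace) of `V2` is a hole of `S` if it is contained
in no block of `S`. -/
def IsHole (S : Set (Submodule (ZMod 2) V2)) (P : Submodule (ZMod 2) V2) : Prop :=
  finrank (ZMod 2) ↥P = 1 ∧ ∀ B ∈ S, ¬ P ≤ B

/-- The number of holes of `S` contained in the subspace `X`. -/
noncomputable def holeCount (S : Set (Submodule (ZMod 2) V2))
    (X : Submodule (ZMod 2) V2) : ℕ :=
  {P | IsHole S P ∧ P ≤ X}.ncard

/-- The span `⟨N⟩` of the set of holes of `S`. -/
noncomputable def holeSpan (S : Set (Submodule (ZMod 2) V2)) : Submodule (ZMod 2) V2 :=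
  sSup {P | IsHole S P}

/-- The number of blocks of `S` contained in the subspace `H`. -/
noncomputable def blocksIn (S : Set (Submodule (ZMod 2) V2))
    (H : Submodule (ZMod 2) V2) : ℕ :=
  {B ∈ S | B ≤ H}.ncard

/-- `spec S i` = the number of hyperplanes of `V2` containing exactly `i` blocks of `S`. -/
noncomputable def spec (S : Set (Submodule (ZMod 2) V2)) (i : ℕ) : ℕ :=
  {H : Submodule (ZMod 2) V2 | finrank (ZMod 2) ↥H = 6 ∧ blocksIn S H = i}.ncard


section Aux
open Finset

noncomputable section
open scoped Classical

instance : Finite (Submodule (ZMod 2) V2) :=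
  Finite.of_injective (fun W => (W : Set V2)) SetLike.coe_injective

instance : Fintype (Submodule (ZMod 2) V2) := Fintype.ofFinite _

instance {R M N : Type*} [Semiring R] [AddCommMonoid M] [Module R M] [AddCommMonoid N]
    [Module R N] [Finite M] [Finite N] : Finite (M →ₗ[R] N) :=
  Finite.of_injective (fun f => (f : M → N)) DFunLike.coe_injective

lemma frV2 : finrank (ZMod 2) V2 = 7 := by
  simpa using Module.finrank_pi (ZMod 2) (ι := Fin 7)

lemma card_module (M : Type*) [AddCommGroup M] [Module (ZMod 2) M] [Finite M] :
    Nat.card M = 2 ^ finrank (ZMod 2) M := by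
  have : Fintype M := Fintype.ofFinite M
  rw [Nat.card_eq_fintype_card, card_eq_pow_finrank (K := ZMod 2), ZMod.card]

lemma ncard_coe_submodule {M : Type*} [AddCommGroup M] [Module (ZMod 2) M] [Finite M]
    (W : Submodule (ZMod 2) M) : (W : Set M).ncard = 2 ^ finrank (ZMod 2) W := by
  have h1 : (W : Set M).ncard = Nat.card W := rfl
  rw [h1, card_module]

lemma ncard_setOf (p : Submodule (ZMod 2) V2 → Prop) [DecidablePred p] :
    {H : Submodule (ZMod 2) V2 | p H}.ncard = (univ.filter p).card := by
  rw [← Set.ncard_coe_finset (univ.filter p)]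
  congr 1
  ext x; simp

/-- The number of hyperplanes containing a subspace `W`. -/
lemma card_hyper_above (W : Submodule (ZMod 2) V2) :
    (univ.filter (fun H : Submodule (ZMod 2) V2 =>
        finrank (ZMod 2) H = 6 ∧ W ≤ H)).card = 2 ^ (7 - finrank (ZMod 2) W) - 1 := by
  rw [← ncard_setOf (fun H : Submodule (ZMod 2) V2 => finrank (ZMod 2) ↥H = 6 ∧ W ≤ H)]
  have hker : ∀ φ : Module.Dual (ZMod 2) V2, φ ≠ 0 →
      finrank (ZMod 2) (LinearMap.ker φ) = 6 := by
    intro φ hφ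
    have h1 : finrank (ZMod 2) (LinearMap.range φ) = 1 := by
      have hle : finrank (ZMod 2) (LinearMap.range φ) ≤ 1 := by
        simpa using Submodule.finrank_le (LinearMap.range φ)
      have hne : LinearMap.range φ ≠ ⊥ := by
        exact fun h => hφ (LinearMap.range_eq_bot.mp h)
      have hpos : finrank (ZMod 2) (LinearMap.range φ) ≠ 0 := by
        intro h0
        exact hne (Submodule.finrank_eq_zero.mp h0)
      omega
    have h2 := LinearMap.finrank_range_add_finrank_ker φ
    rw [frV2, h1] at h2
    omega
  set A : Set (Module.Dual (ZMod 2) V2) := (W.dualAnnihilator : Set _) \ {0} with hA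
  have hinj : Set.InjOn LinearMap.ker A := by
    intro φ hφ ψ hψ h
    have h01 : ∀ a : ZMod 2, a ≠ 0 → a = 1 := by decide
    apply LinearMap.ext
    intro x
    by_cases hx : x ∈ LinearMap.ker φ
    · have hx' : x ∈ LinearMap.ker ψ := h ▸ hx
      rw [LinearMap.mem_ker] at hx hx'
      rw [hx, hx']
    · have hx' : x ∉ LinearMap.ker ψ := h ▸ hx
      rw [LinearMap.mem_ker] at hx hx'
      rw [h01 _ hx, h01 _ hx']
  have himg : LinearMap.ker '' A =
      {H : Submodule (ZMod 2) V2 | finrank (ZMod 2) H = 6 ∧ W ≤ H} := by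
    ext H
    constructor
    · rintro ⟨φ, ⟨hφann, hφ0⟩, rfl⟩
      have hφ0' : φ ≠ 0 := by simpa using hφ0
      have hφann' : φ ∈ W.dualAnnihilator := SetLike.mem_coe.mp hφann
      refine ⟨hker φ hφ0', fun w hw => ?_⟩
      rw [LinearMap.mem_ker]
      exact (Submodule.mem_dualAnnihilator φ).1 hφann' w hw
    · rintro ⟨h6, hWH⟩
      have hq : finrank (ZMod 2) (V2 ⧸ H) = 1 := by
        have := Submodule.finrank_quotient_add_finrank H
        rw [frV2, h6] at this; omega
      obtain ⟨e⟩ : Nonempty ((V2 ⧸ H) ≃ₗ[ZMod 2] ZMod 2) :=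
        FiniteDimensional.nonempty_linearEquiv_of_finrank_eq (by simp [hq])
      have hkerφ : LinearMap.ker (e.toLinearMap ∘ₗ H.mkQ) = H := by
        rw [LinearMap.ker_comp, LinearEquiv.ker, Submodule.comap_bot, Submodule.ker_mkQ]
      refine ⟨e.toLinearMap ∘ₗ H.mkQ, ⟨?_, ?_⟩, hkerφ⟩
      · apply SetLike.mem_coe.mpr
        rw [Submodule.mem_dualAnnihilator]
        intro w hw
        have : H.mkQ w = 0 := (Submodule.Quotient.mk_eq_zero H).mpr (hWH hw)
        simp [LinearMap.comp_apply, this]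
      · intro h0
        have h0' : e.toLinearMap ∘ₗ H.mkQ = 0 := Set.mem_singleton_iff.mp h0
        rw [h0', LinearMap.ker_zero] at hkerφ
        rw [← hkerφ, finrank_top, frV2] at h6
        omega
  rw [← himg, Set.ncard_image_of_injOn hinj, hA,
    Set.ncard_diff_singleton_of_mem (SetLike.mem_coe.mpr (Submodule.zero_mem W.dualAnnihilator))]
  have hcardann : ((W.dualAnnihilator : Set (Module.Dual (ZMod 2) V2))).ncard
      = 2 ^ (7 - finrank (ZMod 2) W) := by
    have h1 : ((W.dualAnnihilator : Set (Module.Dual (ZMod 2) V2))).ncard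
        = Nat.card W.dualAnnihilator := rfl
    have h2 : Nat.card W.dualAnnihilator = Nat.card (Module.Dual (ZMod 2) (V2 ⧸ W)) :=
      (Nat.card_congr (Submodule.dualQuotEquivDualAnnihilator W).toEquiv).symm
    have h3 : Nat.card (Module.Dual (ZMod 2) (V2 ⧸ W))
        = 2 ^ finrank (ZMod 2) (Module.Dual (ZMod 2) (V2 ⧸ W)) := card_module _
    have h4 : finrank (ZMod 2) (Module.Dual (ZMod 2) (V2 ⧸ W)) = finrank (ZMod 2) (V2 ⧸ W) :=
      Subspace.dual_finrank_eq
    have h5 := Submodule.finrank_quotient_add_finrank W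
    rw [frV2] at h5
    rw [h1, h2, h3, h4]
    congr 1
    omega
  rw [hcardann]

end

noncomputable section
open scoped Classical


lemma finrank_sup_six {B₁ B₂ : Submodule (ZMod 2) V2} (h₁ : finrank (ZMod 2) B₁ = 3)
    (h₂ : finrank (ZMod 2) B₂ = 3) (hbot : B₁ ⊓ B₂ = ⊥) :
    finrank (ZMod 2) ↥(B₁ ⊔ B₂) = 6 := by
  have := Submodule.finrank_sup_add_finrank_inf_eq B₁ B₂
  rw [h₁, h₂, hbot] at this
  simpa [finrank_bot] using this

lemma blocks_le_three {S : Set (Submodule (ZMod 2) V2)} (hS : IsPPS S) (h17 : S.ncard = 17)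
    (H : Submodule (ZMod 2) V2) (h6 : finrank (ZMod 2) H = 6) :
    (S.toFinset.filter (fun B => B ≤ H)).card ≤ 3 := by
  set sF := S.toFinset with hsF
  have hcard : sF.card = 17 := by rw [hsF, ← Set.ncard_eq_toFinset_card', h17]
  -- nonzero vectors of B ⊓ H
  set N : Submodule (ZMod 2) V2 → Finset V2 :=
    fun B => ((B ⊓ H : Submodule (ZMod 2) V2) : Set V2).toFinset.erase 0 with hN
  have hNcard : ∀ B, (N B).card = 2 ^ finrank (ZMod 2) ↥(B ⊓ H) - 1 := by
    intro B
    rw [hN]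
    rw [Finset.card_erase_of_mem (by simp)]
    congr 1
    rw [← Set.ncard_eq_toFinset_card', ncard_coe_submodule]
  have hrank : ∀ B ∈ sF, finrank (ZMod 2) ↥(B ⊓ H) = if B ≤ H then 3 else 2 := by
    intro B hB
    have hB3 : finrank (ZMod 2) B = 3 := hS.1 B (Set.mem_toFinset.mp hB)
    by_cases hle : B ≤ H
    · rw [if_pos hle, inf_eq_left.mpr hle, hB3]
    · rw [if_neg hle]
      have hsum := Submodule.finrank_sup_add_finrank_inf_eq B H
      have hsle : finrank (ZMod 2) ↥(B ⊔ H) ≤ 7 := by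
        have := Submodule.finrank_le (B ⊔ H)
        rwa [frV2] at this
      have hlt : B ⊓ H < B := lt_of_le_of_ne inf_le_left (fun h => hle (inf_eq_left.mp h))
      have h2 : finrank (ZMod 2) ↥(B ⊓ H) < finrank (ZMod 2) B :=
        Submodule.finrank_lt_finrank_of_lt hlt
      rw [hB3, h6] at hsum
      rw [hB3] at h2
      omega
  -- disjointness and union bound
  have hdisj : ∀ B₁ ∈ sF, ∀ B₂ ∈ sF, B₁ ≠ B₂ → Disjoint (N B₁) (N B₂) := by
    intro B₁ h₁ B₂ h₂ hne
    rw [Finset.disjoint_left]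
    intro x hx₁ hx₂
    rw [hN] at hx₁ hx₂
    simp only [Finset.mem_erase, Set.mem_toFinset, SetLike.mem_coe] at hx₁ hx₂
    have hbot := hS.2 B₁ (Set.mem_toFinset.mp h₁) B₂ (Set.mem_toFinset.mp h₂) hne
    have : x ∈ B₁ ⊓ B₂ := ⟨hx₁.2.1, hx₂.2.1⟩
    rw [hbot, Submodule.mem_bot] at this
    exact hx₁.1 this
  have hsub : sF.biUnion N ⊆ ((H : Set V2).toFinset.erase 0) := by
    intro x hx
    rw [Finset.mem_biUnion] at hx
    obtain ⟨B, _, hxB⟩ := hx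
    rw [hN] at hxB
    simp only [Finset.mem_erase, Set.mem_toFinset, SetLike.mem_coe] at hxB ⊢
    exact ⟨hxB.1, hxB.2.2⟩
  have hsum : ∑ B ∈ sF, (N B).card ≤ 63 := by
    rw [← Finset.card_biUnion hdisj]
    calc (sF.biUnion N).card ≤ ((H : Set V2).toFinset.erase 0).card := Finset.card_le_card hsub
      _ = 2 ^ 6 - 1 := by
          rw [Finset.card_erase_of_mem (by simp), ← Set.ncard_eq_toFinset_card',
            ncard_coe_submodule, h6]
      _ = 63 := by norm_num
  -- evaluate the sum
  set b := (sF.filter (fun B => B ≤ H)).card with hb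
  have hsplit : ∑ B ∈ sF, (N B).card = 7 * b + 3 * (17 - b) := by
    rw [← Finset.sum_filter_add_sum_filter_not sF (fun B => B ≤ H)]
    have h7 : ∑ B ∈ sF.filter (fun B => B ≤ H), (N B).card = 7 * b := by
      rw [Finset.sum_congr rfl (fun B hB => ?_), Finset.sum_const, hb, smul_eq_mul, mul_comm]
      rw [Finset.mem_filter] at hB
      rw [hNcard, hrank B hB.1, if_pos hB.2]
      norm_num
    have h3 : ∑ B ∈ sF.filter (fun B => ¬ B ≤ H), (N B).card = 3 * (17 - b) := by
      rw [Finset.sum_congr rfl (fun B hB => ?_), Finset.sum_const, smul_eq_mul, mul_comm]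
      · congr 1
        rw [hb, Finset.filter_not, Finset.card_sdiff_of_subset (Finset.filter_subset _ _), hcard]
      · rw [Finset.mem_filter] at hB
        rw [hNcard, hrank B hB.1, if_neg hB.2]
        norm_num
    rw [h7, h3]
  have hble : b ≤ 17 := by
    rw [hb, ← hcard]; exact Finset.card_le_card (Finset.filter_subset _ _)
  rw [hsplit] at hsum
  omega

end

noncomputable section
open scoped Classical


lemma sum_card_filter_comm {α β : Type*} (s : Finset α) (t : Finset β) (r : α → β → Prop)
    [∀ a b, Decidable (r a b)] :
    ∑ a ∈ s, (t.filter (fun b => r a b)).card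
      = ∑ b ∈ t, (s.filter (fun a => r a b)).card := by
  simp_rw [Finset.card_filter]
  exact Finset.sum_comm

theorem max_pps_contains_five_configuration (S : Set (Submodule (ZMod 2) V2))
    (hS : IsPPS S) (h17 : S.ncard = 17) :
    ∃ T ⊆ S, T.ncard = 5 ∧
      ∃ H₁ H₂ : Submodule (ZMod 2) V2,
        finrank (ZMod 2) ↥H₁ = 6 ∧ finrank (ZMod 2) ↥H₂ = 6 ∧ H₁ ≠ H₂ ∧
        blocksIn T H₁ = 3 ∧ blocksIn T H₂ = 3 := by
  set sF := S.toFinset with hsF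
  have hmem : ∀ B, B ∈ sF ↔ B ∈ S := fun B => Set.mem_toFinset
  have hcard : sF.card = 17 := by rw [hsF, ← Set.ncard_eq_toFinset_card', h17]
  set f : Submodule (ZMod 2) V2 → ℕ :=
    fun H => (sF.filter (fun B => B ≤ H)).card with hf
  set Hy : Finset (Submodule (ZMod 2) V2) :=
    univ.filter (fun H => finrank (ZMod 2) ↥H = 6) with hHy
  have hHymem : ∀ H, H ∈ Hy ↔ finrank (ZMod 2) ↥H = 6 := by
    intro H; rw [hHy]; simp
  -- each block lies in exactly 15 hyperplanes
  have h15 : ∀ B ∈ sF, (Hy.filter (fun H => B ≤ H)).card = 15 := by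
    intro B hB
    have h3 := hS.1 B ((hmem B).1 hB)
    have hset : Hy.filter (fun H => B ≤ H)
        = univ.filter (fun H : Submodule (ZMod 2) V2 => finrank (ZMod 2) ↥H = 6 ∧ B ≤ H) := by
      ext H; simp [hHy]
    rw [hset, card_hyper_above, h3]
    norm_num
  -- each pair of distinct blocks lies in exactly 1 hyperplane
  have h1pair : ∀ B₁ ∈ sF, ∀ B₂ ∈ sF, B₁ ≠ B₂ →
      (Hy.filter (fun H => B₁ ≤ H ∧ B₂ ≤ H)).card = 1 := by
    intro B₁ h₁ B₂ h₂ hne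
    have hr : finrank (ZMod 2) ↥(B₁ ⊔ B₂) = 6 :=
      finrank_sup_six (hS.1 B₁ ((hmem B₁).1 h₁)) (hS.1 B₂ ((hmem B₂).1 h₂))
        (hS.2 B₁ ((hmem B₁).1 h₁) B₂ ((hmem B₂).1 h₂) hne)
    have hset : Hy.filter (fun H => B₁ ≤ H ∧ B₂ ≤ H)
        = univ.filter (fun H : Submodule (ZMod 2) V2 =>
            finrank (ZMod 2) ↥H = 6 ∧ B₁ ⊔ B₂ ≤ H) := by
      ext H; simp [hHy, sup_le_iff]
    rw [hset, card_hyper_above, hr]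
    norm_num
  -- first sum
  have hsum1 : ∑ H ∈ Hy, f H = 255 := by
    rw [hf]
    rw [show (∑ H ∈ Hy, (sF.filter (fun B => B ≤ H)).card)
        = ∑ B ∈ sF, (Hy.filter (fun H => B ≤ H)).card from
      sum_card_filter_comm Hy sF (fun H B => B ≤ H)]
    rw [Finset.sum_congr rfl h15, Finset.sum_const, hcard]
    norm_num
  -- second sum
  have hsum2 : ∑ H ∈ Hy, f H * f H = 527 := by
    have hexp : ∀ H, f H * f H
        = ∑ B₁ ∈ sF, ∑ B₂ ∈ sF, (if B₁ ≤ H ∧ B₂ ≤ H then 1 else 0) := by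
      intro H
      simp only [hf]
      rw [Finset.card_filter, Finset.sum_mul_sum]
      congr 1; ext B₁; congr 1; ext B₂
      by_cases h₁ : B₁ ≤ H <;> by_cases h₂ : B₂ ≤ H <;> simp [h₁, h₂]
    calc ∑ H ∈ Hy, f H * f H
        = ∑ H ∈ Hy, ∑ B₁ ∈ sF, ∑ B₂ ∈ sF, (if B₁ ≤ H ∧ B₂ ≤ H then 1 else 0) :=
          Finset.sum_congr rfl (fun H _ => hexp H)
      _ = ∑ B₁ ∈ sF, ∑ H ∈ Hy, ∑ B₂ ∈ sF, (if B₁ ≤ H ∧ B₂ ≤ H then 1 else 0) :=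
          Finset.sum_comm
      _ = ∑ B₁ ∈ sF, ∑ B₂ ∈ sF, ∑ H ∈ Hy, (if B₁ ≤ H ∧ B₂ ≤ H then 1 else 0) :=
          Finset.sum_congr rfl (fun B₁ _ => Finset.sum_comm)
      _ = ∑ B₁ ∈ sF, ∑ B₂ ∈ sF, (Hy.filter (fun H => B₁ ≤ H ∧ B₂ ≤ H)).card := by
          simp_rw [Finset.card_filter]
      _ = ∑ B₁ ∈ sF, 31 := by
          refine Finset.sum_congr rfl (fun B₁ hB₁ => ?_)
          rw [← Finset.add_sum_erase sF _ hB₁]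
          have hdiag : (Hy.filter (fun H => B₁ ≤ H ∧ B₁ ≤ H)).card = 15 := by
            rw [show (Hy.filter (fun H => B₁ ≤ H ∧ B₁ ≤ H))
                = (Hy.filter (fun H => B₁ ≤ H)) from by ext H; simp, h15 B₁ hB₁]
          have hoff : ∑ B₂ ∈ sF.erase B₁, (Hy.filter (fun H => B₁ ≤ H ∧ B₂ ≤ H)).card = 16 := by
            have hone : ∀ B₂ ∈ sF.erase B₁, (Hy.filter (fun H => B₁ ≤ H ∧ B₂ ≤ H)).card = 1 := by
              intro B₂ hB₂
              rw [Finset.mem_erase] at hB₂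
              exact h1pair B₁ hB₁ B₂ hB₂.2 (fun h => hB₂.1 h.symm)
            rw [Finset.sum_congr rfl hone, Finset.sum_const,
              Finset.card_erase_of_mem hB₁, hcard]
            norm_num
          rw [hdiag, hoff]
      _ = 527 := by
          rw [Finset.sum_const, hcard]
          norm_num
  -- f H ≤ 3 on hyperplanes
  have hb3 : ∀ H ∈ Hy, f H ≤ 3 := fun H hH =>
    blocks_le_three hS h17 H ((hHymem H).1 hH)
  -- the 3-hyperplanes
  set A3 : Finset (Submodule (ZMod 2) V2) := Hy.filter (fun H => f H = 3) with hA3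
  have hA3card : 6 ≤ A3.card := by
    have hkey : ∀ n : ℕ, n ≤ 3 → n * n ≤ 2 * n + (if n = 3 then 3 else 0) := by
      intro n hn; interval_cases n <;> simp
    have hle : ∑ H ∈ Hy, f H * f H
        ≤ ∑ H ∈ Hy, (2 * f H + (if f H = 3 then 3 else 0)) :=
      Finset.sum_le_sum (fun H hH => hkey (f H) (hb3 H hH))
    rw [hsum2, Finset.sum_add_distrib, ← Finset.mul_sum, hsum1] at hle
    have hite : ∑ H ∈ Hy, (if f H = 3 then 3 else 0) = 3 * A3.card := by
      rw [hA3, ← Finset.sum_filter, Finset.sum_const, smul_eq_mul, mul_comm]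
    rw [hite] at hle
    omega
  -- some block lies in two 3-hyperplanes
  have hswap : ∑ H ∈ A3, f H = ∑ B ∈ sF, (A3.filter (fun H => B ≤ H)).card := by
    rw [hf]
    exact sum_card_filter_comm A3 sF (fun H B => B ≤ H)
  have hA3sum : ∑ H ∈ A3, f H = 3 * A3.card := by
    have h3' : ∀ H ∈ A3, f H = 3 := by
      intro H hH
      rw [hA3, Finset.mem_filter] at hH
      exact hH.2
    rw [Finset.sum_congr rfl h3', Finset.sum_const, smul_eq_mul, mul_comm]
  have hexistsB : ∃ B ∈ sF, 2 ≤ (A3.filter (fun H => B ≤ H)).card := by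
    by_contra hcon
    push_neg at hcon
    have : ∑ B ∈ sF, (A3.filter (fun H => B ≤ H)).card ≤ ∑ B ∈ sF, 1 :=
      Finset.sum_le_sum (fun B hB => by have := hcon B hB; omega)
    rw [Finset.sum_const, hcard, smul_eq_mul, mul_one, ← hswap, hA3sum] at this
    omega
  obtain ⟨B, hBsF, hB2⟩ := hexistsB
  obtain ⟨H₁, hH₁, H₂, hH₂, hne12⟩ := Finset.one_lt_card.mp (by omega : 1 < (A3.filter (fun H => B ≤ H)).card)
  rw [Finset.mem_filter, hA3, Finset.mem_filter] at hH₁ hH₂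
  obtain ⟨⟨hH₁Hy, hf₁⟩, hBH₁⟩ := hH₁
  obtain ⟨⟨hH₂Hy, hf₂⟩, hBH₂⟩ := hH₂
  have h6₁ : finrank (ZMod 2) ↥H₁ = 6 := (hHymem H₁).1 hH₁Hy
  have h6₂ : finrank (ZMod 2) ↥H₂ = 6 := (hHymem H₂).1 hH₂Hy
  -- the two block sets
  set s₁ := sF.filter (fun X => X ≤ H₁) with hs₁
  set s₂ := sF.filter (fun X => X ≤ H₂) with hs₂
  have hc₁ : s₁.card = 3 := hf₁
  have hc₂ : s₂.card = 3 := hf₂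
  have hBs₁ : B ∈ s₁ := Finset.mem_filter.mpr ⟨hBsF, hBH₁⟩
  have hBs₂ : B ∈ s₂ := Finset.mem_filter.mpr ⟨hBsF, hBH₂⟩
  -- intersection is exactly {B}
  have hinfrank : finrank (ZMod 2) ↥(H₁ ⊓ H₂) < 6 := by
    have hlt : H₁ ⊓ H₂ < H₁ := by
      refine lt_of_le_of_ne inf_le_left (fun h => hne12 ?_)
      exact Submodule.eq_of_le_of_finrank_eq (inf_eq_left.mp h) (h6₁.trans h6₂.symm)
    have := Submodule.finrank_lt_finrank_of_lt hlt
    omega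
  have hinter : s₁ ∩ s₂ = {B} := by
    ext X
    simp only [Finset.mem_inter, Finset.mem_singleton, hs₁, hs₂, Finset.mem_filter]
    constructor
    · rintro ⟨⟨hXsF, hX1⟩, -, hX2⟩
      by_contra hne
      have hXS := (hmem X).1 hXsF
      have hBS := (hmem B).1 hBsF
      have hr : finrank (ZMod 2) ↥(X ⊔ B) = 6 :=
        finrank_sup_six (hS.1 X hXS) (hS.1 B hBS) (hS.2 X hXS B hBS hne)
      have hle : X ⊔ B ≤ H₁ ⊓ H₂ := sup_le (le_inf hX1 hX2) (le_inf hBH₁ hBH₂)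
      have := Submodule.finrank_mono hle
      omega
    · rintro rfl
      exact ⟨⟨hBsF, hBH₁⟩, hBsF, hBH₂⟩
  refine ⟨(↑(s₁ ∪ s₂) : Set (Submodule (ZMod 2) V2)), ?_, ?_, H₁, H₂, h6₁, h6₂, hne12, ?_, ?_⟩
  · intro X hX
    rw [Finset.mem_coe, Finset.mem_union] at hX
    rcases hX with h | h
    · exact (hmem X).1 (Finset.mem_filter.mp h).1
    · exact (hmem X).1 (Finset.mem_filter.mp h).1
  · rw [Set.ncard_coe_finset]
    have := Finset.card_union_add_card_inter s₁ s₂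
    rw [hinter, Finset.card_singleton, hc₁, hc₂] at this
    omega
  · have hset : {X ∈ (↑(s₁ ∪ s₂) : Set (Submodule (ZMod 2) V2)) | X ≤ H₁} = ↑s₁ := by
      ext X
      simp only [Set.mem_setOf_eq, Finset.coe_union, Set.mem_union, Finset.mem_coe, hs₁, hs₂,
        Finset.mem_filter]
      constructor
      · rintro ⟨h | h, hX1⟩
        · exact ⟨h.1, hX1⟩
        · exact ⟨h.1, hX1⟩
      · rintro ⟨hXsF, hX1⟩
        exact ⟨Or.inl ⟨hXsF, hX1⟩, hX1⟩
    rw [blocksIn, hset, Set.ncard_coe_finset, hc₁]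
  · have hset : {X ∈ (↑(s₁ ∪ s₂) : Set (Submodule (ZMod 2) V2)) | X ≤ H₂} = ↑s₂ := by
      ext X
      simp only [Set.mem_setOf_eq, Finset.coe_union, Set.mem_union, Finset.mem_coe, hs₁, hs₂,
        Finset.mem_filter]
      constructor
      · rintro ⟨h | h, hX2⟩
        · exact ⟨h.1, hX2⟩
        · exact ⟨h.1, hX2⟩
      · rintro ⟨hXsF, hX2⟩
        exact ⟨Or.inr ⟨hXsF, hX2⟩, hX2⟩
    rw [blocksIn, hset, Set.ncard_coe_finset, hc₂]

end
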